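/- arXiv:2602.01733 — 2 statements merged into one kernel-verified Lean document; each statement's English description precedes it below -/
import Mathlib

section
/- Let h : [0,∞) → [0,∞) be strictly increasing, let s_1, ..., s_n, w > 0 with h(w) > 0, and for α ∈ (0,1) define C(α) = {y ∈ Y : (n+1)h(S(y)) / (Σ_i h(s_i) + h(S(y))) < 1/α}, where S : Y → [0,∞) is a score function on a finite label set Y. Suppose T ∈ ℕ and w = sup{l > 0 : |{y : S(y) < l}| ≤ T}. Then the infimum α̃ = inf{α ∈ (0,1) : |C(α)| ≤ T} satisfies α̃ = (Σ_{i=1}^n h(s_i) / h(w) + 1) / (n+1), provided this quantity lies in (0,1). -/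
open MeasureTheory

/-- Closed-form expression for the data-dependent miscoverage level. -/
theorem stmt3 {Y : Type*} [Fintype Y] (S : Y → ℝ) (hS : ∀ y, 0 ≤ S y)
    (h : ℝ → ℝ) (hmono : StrictMonoOn h (Set.Ici 0)) (hnn : ∀ s, 0 ≤ s → 0 ≤ h s)
    (n : ℕ) (s : Fin n → ℝ) (hs : ∀ i, 0 < s i)
    (w : ℝ) (hw : 0 < w) (hhw : 0 < h w) (T : ℕ)
    (hwdef : w = sSup {l : ℝ | 0 < l ∧ Set.ncard {y : Y | S y < l} ≤ T})
    (hin : ((∑ i, h (s i)) / h w + 1) / ((n : ℝ) + 1) ∈ Set.Ioo (0 : ℝ) 1) :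
    sInf {α : ℝ | α ∈ Set.Ioo (0 : ℝ) 1 ∧
        Set.ncard {y : Y |
          ((n : ℝ) + 1) * h (S y) / ((∑ i, h (s i)) + h (S y)) < 1 / α} ≤ T}
      = ((∑ i, h (s i)) / h w + 1) / ((n : ℝ) + 1) := by
  classical
  obtain ⟨hpos, hlt1⟩ := hin
  -- n ≥ 1
  have hn : 0 < n := by
    rcases Nat.eq_zero_or_pos n with h0 | h0
    · subst h0
      simp at hlt1
    · exact h0
  set A := ∑ i, h (s i) with hA
  have hApos : 0 < A := by
    apply Finset.sum_pos
    · intro i _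
      have h1 := hmono (Set.mem_Ici.mpr le_rfl) (Set.mem_Ici.mpr (hs i).le) (hs i)
      have h0 : 0 ≤ h 0 := hnn 0 le_rfl
      linarith
    · exact ⟨⟨0, hn⟩, Finset.mem_univ _⟩
  have hSnn : ∀ y : Y, 0 ≤ h (S y) := fun y => hnn _ (hS y)
  -- key equivalence
  have key : ∀ α : ℝ, 0 < α → ∀ y : Y,
      (((n : ℝ) + 1) * h (S y) / (A + h (S y)) < 1 / α ↔
        (((n : ℝ) + 1) * α - 1) * h (S y) < A) := by
    intro α hα y
    have hden : 0 < A + h (S y) := by have := hSnn y; linarith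
    rw [div_lt_div_iff₀ hden hα]
    constructor <;> intro H <;> nlinarith [hSnn y]
  set L := {l : ℝ | 0 < l ∧ Set.ncard {y : Y | S y < l} ≤ T} with hL
  have hLne : L.Nonempty := by
    by_contra hne
    rw [Set.not_nonempty_iff_eq_empty] at hne
    have h0 : sSup L = 0 := by rw [hne]; exact Real.sSup_empty
    rw [hwdef, h0] at hw
    exact lt_irrefl 0 hw
  have hLbdd : BddAbove L := by
    by_contra hbd
    rw [hwdef, Real.sSup_of_not_bddAbove hbd] at hw
    exact lt_irrefl 0 hw
  -- claim 1 : ncard {S y < w} ≤ T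
  have claim1 : Set.ncard {y : Y | S y < w} ≤ T := by
    rcases Set.eq_empty_or_nonempty {y : Y | S y < w} with he | hne
    · simp [he]
    · obtain ⟨y₀, hy₀mem, hy₀max⟩ :=
        Set.exists_max_image {y : Y | S y < w} S (Set.toFinite _) hne
      have hmw : S y₀ < w := hy₀mem
      obtain ⟨l, hlL, hll⟩ := exists_lt_of_lt_csSup hLne (by rw [← hwdef]; exact hmw)
      refine le_trans (Set.ncard_le_ncard ?_ (Set.toFinite _)) hlL.2
      intro y hy
      exact lt_of_le_of_lt (hy₀max y hy) hll
  -- claim 2 : T < ncard {S y ≤ w}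
  have claim2 : T < Set.ncard {y : Y | S y ≤ w} := by
    set F := Finset.image S (Finset.univ.filter (fun y => w < S y)) with hF
    set l' := if hne : F.Nonempty then F.min' hne else w + 1 with hl'
    have hl'w : w < l' := by
      rw [hl']
      split_ifs with hne
      · obtain ⟨y, hy, hyeq⟩ := Finset.mem_image.mp (F.min'_mem hne)
        rw [← hyeq]
        exact (Finset.mem_filter.mp hy).2
      · linarith
    have hl'min : ∀ y : Y, S y < l' → S y ≤ w := by
      intro y hy
      by_contra hc
      push_neg at hc
      have hmem : S y ∈ F := Finset.mem_image.mpr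
        ⟨y, Finset.mem_filter.mpr ⟨Finset.mem_univ _, hc⟩, rfl⟩
      have hne : F.Nonempty := ⟨S y, hmem⟩
      have : l' ≤ S y := by
        rw [hl']
        simp only [dif_pos hne]
        exact F.min'_le _ hmem
      linarith
    have hl'notL : l' ∉ L := by
      intro hmem
      have : l' ≤ w := hwdef ▸ le_csSup hLbdd hmem
      linarith
    have hl'card : T < Set.ncard {y : Y | S y < l'} := by
      by_contra hc
      push_neg at hc
      exact hl'notL ⟨lt_trans hw hl'w, hc⟩
    refine lt_of_lt_of_le hl'card (Set.ncard_le_ncard ?_ (Set.toFinite _))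
    intro y hy
    exact hl'min y hy
  set αs := (A / h w + 1) / ((n : ℝ) + 1) with hαs
  have hne1 : ((n : ℝ) + 1) ≠ 0 := by positivity
  have hfact : ((n : ℝ) + 1) * αs - 1 = A / h w := by
    rw [hαs, mul_div_cancel₀ _ hne1]
    ring
  set M := {α : ℝ | α ∈ Set.Ioo (0 : ℝ) 1 ∧
      Set.ncard {y : Y | ((n : ℝ) + 1) * h (S y) / (A + h (S y)) < 1 / α} ≤ T} with hM
  have hmemαs : αs ∈ M := by
    refine ⟨⟨hpos, hlt1⟩, ?_⟩
    have hsetEq : {y : Y | ((n : ℝ) + 1) * h (S y) / (A + h (S y)) < 1 / αs}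
        = {y : Y | S y < w} := by
      ext y
      simp only [Set.mem_setOf_eq]
      rw [key αs hpos y, hfact]
      constructor
      · intro H
        have hlt : h (S y) < h w := by
          by_contra hc
          push_neg at hc
          have h2 : A / h w * h w ≤ A / h w * h (S y) :=
            mul_le_mul_of_nonneg_left hc (by positivity)
          rw [div_mul_cancel₀ _ (ne_of_gt hhw)] at h2
          linarith
        by_contra hc
        push_neg at hc
        have : h w ≤ h (S y) :=
          hmono.monotoneOn (Set.mem_Ici.mpr hw.le) (Set.mem_Ici.mpr (hS y)) hc
        linarith
      · intro H
        have hlt : h (S y) < h w :=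
          hmono (Set.mem_Ici.mpr (hS y)) (Set.mem_Ici.mpr hw.le) H
        have hqpos : 0 < A / h w := div_pos hApos hhw
        nlinarith [div_mul_cancel₀ A (ne_of_gt hhw)]
    rw [hsetEq]
    exact claim1
  have hlb : ∀ α ∈ M, αs ≤ α := by
    intro α hαM
    obtain ⟨⟨hα0, hα1⟩, hcard⟩ := hαM
    by_contra hc
    push_neg at hc
    have hsub : {y : Y | S y ≤ w} ⊆
        {y : Y | ((n : ℝ) + 1) * h (S y) / (A + h (S y)) < 1 / α} := by
      intro y hy
      simp only [Set.mem_setOf_eq] at hy ⊢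
      rw [key α hα0 y]
      have h1 : h (S y) ≤ h w :=
        hmono.monotoneOn (Set.mem_Ici.mpr (hS y)) (Set.mem_Ici.mpr hw.le) hy
      have h2 : ((n : ℝ) + 1) * α - 1 < A / h w := by
        rw [← hfact]
        nlinarith
      rcases le_or_gt (((n : ℝ) + 1) * α - 1) 0 with hle | hgt
      · nlinarith [hSnn y]
      · nlinarith [mul_le_mul_of_nonneg_left h1 hgt.le,
          mul_lt_mul_of_pos_right h2 hhw,
          div_mul_cancel₀ A (ne_of_gt hhw)]
    have hge := Set.ncard_le_ncard hsub (Set.toFinite _)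
    omega
  exact IsLeast.csInf_eq ⟨hmemαs, hlb⟩
end

section
/- Let w_m, w_M, ε satisfy 0 < ε < w_m/2 and 0 < w_m ≤ w_M. Fix w ∈ [w_m, w_M] and define Δ^ε(s) = (ε/w)s·1{s < w} − (ε/(s − w + 1))·1{s ≥ w} for s ≥ 0. Then (i) |Δ^ε(s)| ≤ ε for all s ≥ 0, and (ii) the function s ↦ w·1{s ≥ w} + Δ^ε(s) is strictly increasing on [0,∞). -/
/-- The perturbation Δ^ε is uniformly ε-small and makes the step transformation
strictly increasing on [0,∞). -/
theorem stmt18 (wm wM ε w : ℝ) (hε : 0 < ε) (hεm : ε < wm / 2)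
    (hm : 0 < wm) (hmM : wm ≤ wM) (hw : w ∈ Set.Icc wm wM) :
    (∀ s : ℝ, 0 ≤ s →
      |(if s < w then ε / w * s else -(ε / (s - w + 1)))| ≤ ε) ∧
    StrictMonoOn
      (fun s : ℝ => (if w ≤ s then w else 0)
        + (if s < w then ε / w * s else -(ε / (s - w + 1))))
      (Set.Ici 0) := by
  obtain ⟨hw1, hw2⟩ := hw
  have hw0 : 0 < w := lt_of_lt_of_le hm hw1
  have hwε : 2 * ε < w := by linarith
  constructor
  · intro s hs
    by_cases h : s < w
    · rw [if_pos h, abs_of_nonneg (by positivity)]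
      calc ε / w * s ≤ ε / w * w := by
            exact mul_le_mul_of_nonneg_left h.le (by positivity)
        _ = ε := by field_simp
    · rw [if_neg h, abs_neg]
      push_neg at h
      have h1 : (1:ℝ) ≤ s - w + 1 := by linarith
      rw [abs_of_nonneg (by positivity)]
      exact div_le_self hε.le h1
  · intro a ha b hb hab
    simp only [Set.mem_Ici] at ha hb
    dsimp only
    by_cases haw : a < w
    · by_cases hbw : b < w
      · rw [if_neg (not_le.mpr haw), if_neg (not_le.mpr hbw), if_pos haw, if_pos hbw]
        have : ε / w * a < ε / w * b :=
          mul_lt_mul_of_pos_left hab (by positivity)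
        linarith
      · push_neg at hbw
        rw [if_neg (not_le.mpr haw), if_pos hbw, if_pos haw, if_neg (not_lt.mpr hbw)]
        have h1 : ε / w * a < ε := by
          calc ε / w * a < ε / w * w := mul_lt_mul_of_pos_left haw (by positivity)
            _ = ε := by field_simp
        have h2 : ε / (b - w + 1) ≤ ε := div_le_self hε.le (by linarith)
        linarith
    · push_neg at haw
      have hbw : w ≤ b := le_trans haw hab.le
      rw [if_pos haw, if_pos hbw, if_neg (not_lt.mpr haw), if_neg (not_lt.mpr hbw)]
      have : ε / (b - w + 1) < ε / (a - w + 1) :=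
        div_lt_div_of_pos_left hε (by linarith) (by linarith)
      linarith
end
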